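/- arXiv:0903.0063 — 5 statements merged into one kernel-verified Lean document; each statement's English description precedes it below -/
import Mathlib

section
/- For an infinite cardinal κ, d(κ) = max(d, cf([κ]^{≤ω})), where d = d(ω) is the dominating number (least number of compact sets covering ω^ω) and cf([κ]^{≤ω}) is the least cardinality of a cofinal family of countable subsets of κ. -/
open Cardinal Set Function

/-- `d(c)`: the least number of compact subsets covering `c^ω`, the countable power of a
discrete space of cardinality `c`. -/
noncomputable def dCard (c : Cardinal) : Cardinal :=
  letI : TopologicalSpace c.out := ⊥
  sInf {l | ∃ S : Set (Set (ℕ → c.out)), #↥S = l ∧ (∀ t ∈ S, IsCompact t) ∧ ⋃₀ S = Set.univ}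

/-- `cf([c]^{≤ω})`: the least cardinality of a family of countable subsets of a set of
cardinality `c` such that every countable subset is contained in a member of the family. -/
noncomputable def cfCard (c : Cardinal) : Cardinal :=
  sInf {l | ∃ F : Set (Set c.out), #↥F = l ∧ (∀ a ∈ F, a.Countable) ∧
    ∀ s : Set c.out, s.Countable → ∃ a ∈ F, s ⊆ a}

section Helpers

/-- The set of cardinalities of compact covers of `ℕ → α`. -/
def coverSet (α : Type*) [TopologicalSpace α] : Set Cardinal :=
  {l | ∃ S : Set (Set (ℕ → α)), #↥S = l ∧ (∀ t ∈ S, IsCompact t) ∧ ⋃₀ S = Set.univ}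

/-- The set of cardinalities of cofinal families of countable sets. -/
def cofSet (α : Type*) : Set Cardinal :=
  {l | ∃ F : Set (Set α), #↥F = l ∧ (∀ a ∈ F, a.Countable) ∧
    ∀ s : Set α, s.Countable → ∃ a ∈ F, s ⊆ a}

lemma dCard_eq (c : Cardinal) :
    dCard c = sInf (letI : TopologicalSpace c.out := ⊥; coverSet c.out) := rfl

lemma cfCard_eq (c : Cardinal) : cfCard c = sInf (cofSet c.out) := rfl

universe u
variable {α β : Type u} [TopologicalSpace α] [TopologicalSpace β]
  [DiscreteTopology α] [DiscreteTopology β]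

lemma proj_finite {K : Set (ℕ → α)} (hK : IsCompact K) (n : ℕ) :
    ((fun g : ℕ → α => g n) '' K).Finite :=
  isCompact_iff_finite.mp (hK.image (continuous_apply n))

lemma proj_countable {K : Set (ℕ → α)} (hK : IsCompact K) :
    (⋃ n, (fun g : ℕ → α => g n) '' K).Countable :=
  countable_iUnion fun n => (proj_finite hK n).countable

lemma coverSet_nonempty (α : Type*) [TopologicalSpace α] [DiscreteTopology α] :
    (coverSet α).Nonempty := by
  refine ⟨_, (range fun g : ℕ → α => ({g} : Set (ℕ → α))), rfl, ?_, ?_⟩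
  · rintro t ⟨g, rfl⟩; exact isCompact_singleton
  · ext g; simp

lemma cofSet_nonempty (α : Type*) : (cofSet α).Nonempty :=
  ⟨_, {a : Set α | a.Countable}, rfl, fun a ha => ha, fun s hs => ⟨s, hs, subset_rfl⟩⟩

/-- every member of `coverSet α` is infinite when `α` is infinite -/
lemma aleph0_le_of_mem_coverSet [Infinite α] {l : Cardinal} (hl : l ∈ coverSet α) :
    ℵ₀ ≤ l := by
  obtain ⟨S, rfl, hcomp, hcov⟩ := hl
  by_contra h
  have hfin : S.Finite := Cardinal.lt_aleph0_iff_set_finite.mp (lt_of_not_ge h)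
  have : IsCompact (univ : Set (ℕ → α)) := by
    rw [← hcov]; exact hfin.isCompact_sUnion hcomp
  have h2 : IsCompact (univ : Set α) := by
    have := this.image (continuous_apply 0)
    rwa [Set.image_univ, Set.range_eval] at this
  exact Set.infinite_univ (isCompact_iff_finite.mp h2)

/-- preimage of a compact set under the map induced by an injection is compact -/
lemma compact_preimage (f : β → α) (hf : Injective f) {K : Set (ℕ → α)}
    (hK : IsCompact K) : IsCompact ((fun g : ℕ → β => f ∘ g) ⁻¹' K) := by
  have hcont : Continuous (fun g : ℕ → β => f ∘ g) :=
    continuous_pi fun n => (continuous_of_discreteTopology (f := f)).comp (continuous_apply n)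
  refine IsCompact.of_isClosed_subset
    (isCompact_univ_pi (s := fun n => f ⁻¹' ((fun g : ℕ → α => g n) '' K)) fun n => ?_)
    (hK.isClosed.preimage hcont) ?_
  · exact (Set.Finite.preimage hf.injOn (proj_finite hK n)).isCompact
  · intro g hg n _
    exact ⟨f ∘ g, hg, rfl⟩

lemma coverSet_mono (f : β → α) (hf : Injective f) {l : Cardinal}
    (hl : l ∈ coverSet α) : ∃ l' ∈ coverSet β, l' ≤ l := by
  obtain ⟨S, rfl, hcomp, hcov⟩ := hl
  refine ⟨_, ⟨(fun K => (fun g : ℕ → β => f ∘ g) ⁻¹' K) '' S, rfl, ?_, ?_⟩,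
    Cardinal.mk_image_le⟩
  · rintro t ⟨K, hK, rfl⟩; exact compact_preimage f hf (hcomp K hK)
  · ext g
    simp only [mem_sUnion, mem_image, mem_univ, iff_true]
    have : (f ∘ g) ∈ ⋃₀ S := hcov ▸ mem_univ _
    obtain ⟨K, hK, hgK⟩ := this
    exact ⟨_, ⟨K, hK, rfl⟩, hgK⟩

lemma cof_le_cover [Nonempty α] {l : Cardinal} (hl : l ∈ coverSet α) :
    ∃ l' ∈ cofSet α, l' ≤ l := by
  obtain ⟨S, rfl, hcomp, hcov⟩ := hl
  have hSne : S.Nonempty := by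
    have : (Classical.arbitrary (ℕ → α)) ∈ ⋃₀ S := hcov ▸ mem_univ _
    obtain ⟨K, hK, -⟩ := this; exact ⟨K, hK⟩
  refine ⟨_, ⟨(fun K => ⋃ n, (fun g : ℕ → α => g n) '' K) '' S, rfl, ?_, ?_⟩,
    Cardinal.mk_image_le⟩
  · rintro a ⟨K, hK, rfl⟩; exact proj_countable (hcomp K hK)
  · intro s hs
    rcases s.eq_empty_or_nonempty with rfl | hne
    · obtain ⟨K, hK⟩ := hSne
      exact ⟨_, ⟨K, hK, rfl⟩, empty_subset _⟩
    · obtain ⟨g, rfl⟩ := hs.exists_eq_range hne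
      have : g ∈ ⋃₀ S := hcov ▸ mem_univ _
      obtain ⟨K, hK, hgK⟩ := this
      refine ⟨_, ⟨K, hK, rfl⟩, ?_⟩
      rintro x ⟨n, rfl⟩
      exact mem_iUnion.mpr ⟨n, g, hgK, rfl⟩

/-- upper bound: from a cofinal family and a compact cover of the countable space -/
lemma cover_le_mul [Nonempty α] (e : β ≃ ℕ) {m n : Cardinal}
    (hm : m ∈ coverSet β) (hn : n ∈ cofSet α) :
    ∃ l ∈ coverSet α, l ≤ n * m := by
  obtain ⟨T, rfl, hTcomp, hTcov⟩ := hm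
  obtain ⟨F, rfl, hFcnt, hFcof⟩ := hn
  have hchoice : ∀ a : Set α, ∃ fa : β → α, a.Countable → a.Nonempty → a ⊆ range fa := by
    intro a
    by_cases h : a.Countable ∧ a.Nonempty
    · obtain ⟨g, hg⟩ := h.1.exists_eq_range h.2
      exact ⟨g ∘ e, fun _ _ => by rw [hg, e.surjective.range_comp g]⟩
    · exact ⟨fun _ => Classical.arbitrary α, fun hc hne => absurd ⟨hc, hne⟩ h⟩
  choose fa hfa using hchoice
  set Φ : Set α × Set (ℕ → β) → Set (ℕ → α) :=
    fun p => (fun g : ℕ → β => fa p.1 ∘ g) '' p.2 with hΦ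
  refine ⟨_, ⟨Φ '' (F ×ˢ T), rfl, ?_, ?_⟩, ?_⟩
  · rintro t ⟨⟨a, K⟩, ⟨-, hK⟩, rfl⟩
    exact (hTcomp K hK).image
      (continuous_pi fun i => continuous_of_discreteTopology.comp (continuous_apply i))
  · ext g
    simp only [mem_sUnion, mem_univ, iff_true]
    have hrange : (range g).Countable := countable_range g
    obtain ⟨a, haF, hga⟩ := hFcof _ hrange
    have hane : a.Nonempty := ⟨g 0, hga ⟨0, rfl⟩⟩
    have hsub : a ⊆ range (fa a) := hfa a (hFcnt a haF) hane
    have hh : ∀ i : ℕ, ∃ b : β, fa a b = g i := fun i => hsub (hga ⟨i, rfl⟩)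
    choose h hh using hh
    have : h ∈ ⋃₀ T := hTcov ▸ mem_univ _
    obtain ⟨K, hK, hhK⟩ := this
    refine ⟨Φ (a, K), ⟨(a, K), ⟨haF, hK⟩, rfl⟩, h, hhK, funext hh⟩
  · calc #↥(Φ '' (F ×ˢ T)) ≤ #↥(F ×ˢ T) := Cardinal.mk_image_le
      _ = #↥F * #↥T := by
        rw [Cardinal.mk_congr (Equiv.Set.prod F T), Cardinal.mk_prod,
          Cardinal.lift_id, Cardinal.lift_id]

end Helpers

/-- For an infinite cardinal `κ`, `d(κ) = max(d, cf([κ]^{≤ω}))`, where `d = d(ω)` is the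
dominating number. -/
theorem stmt7 (κ : Cardinal) (hκ : ℵ₀ ≤ κ) :
    dCard κ = max (dCard ℵ₀) (cfCard κ) := by
  letI : TopologicalSpace κ.out := ⊥
  letI : TopologicalSpace (ℵ₀ : Cardinal).out := ⊥
  haveI : DiscreteTopology κ.out := ⟨rfl⟩
  haveI : DiscreteTopology (ℵ₀ : Cardinal).out := ⟨rfl⟩
  haveI : Infinite (ℵ₀ : Cardinal).out := by
    rw [Cardinal.infinite_iff, Cardinal.mk_out]
  haveI : Nonempty κ.out := Cardinal.mk_ne_zero_iff.mp
    (by rw [Cardinal.mk_out]; exact (aleph0_pos.trans_le hκ).ne')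
  -- equivalence ℵ₀.out ≃ ℕ
  obtain ⟨e0⟩ : Nonempty ((ℵ₀ : Cardinal).out ≃ ULift.{_} ℕ) := by
    rw [← Cardinal.eq, Cardinal.mk_out, Cardinal.mk_uLift, Cardinal.mk_nat, Cardinal.lift_aleph0]
  have e : (ℵ₀ : Cardinal).out ≃ ℕ := e0.trans Equiv.ulift
  -- injection ℵ₀.out ↪ κ.out
  obtain ⟨emb⟩ : Nonempty ((ℵ₀ : Cardinal).out ↪ κ.out) := by
    rw [← Cardinal.le_def, Cardinal.mk_out, Cardinal.mk_out]; exact hκ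
  have hdκ : dCard κ = sInf (coverSet κ.out) := rfl
  have hdω : dCard ℵ₀ = sInf (coverSet (ℵ₀ : Cardinal).out) := rfl
  have hcf : cfCard κ = sInf (cofSet κ.out) := rfl
  -- d(ℵ₀) is infinite
  have hdω_inf : ℵ₀ ≤ dCard ℵ₀ := by
    rw [hdω]
    exact le_csInf (coverSet_nonempty _) fun l hl => aleph0_le_of_mem_coverSet hl
  -- the realized members
  have hdκ_mem : dCard κ ∈ coverSet κ.out := hdκ ▸ csInf_mem (coverSet_nonempty _)
  have hdω_mem : dCard ℵ₀ ∈ coverSet (ℵ₀ : Cardinal).out :=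
    hdω ▸ csInf_mem (coverSet_nonempty _)
  have hcf_mem : cfCard κ ∈ cofSet κ.out := hcf ▸ csInf_mem (cofSet_nonempty _)
  apply le_antisymm
  · -- d(κ) ≤ max
    obtain ⟨l, hl, hle⟩ := cover_le_mul e hdω_mem hcf_mem
    refine (hdκ ▸ csInf_le' hl).trans (hle.trans ?_)
    calc cfCard κ * dCard ℵ₀ ≤ max (cfCard κ) (dCard ℵ₀) ⊔ ℵ₀ := Cardinal.mul_le_max _ _
      _ = max (dCard ℵ₀) (cfCard κ) := by
        rw [max_comm (cfCard κ)]
        exact sup_eq_left.mpr (hdω_inf.trans (le_max_left _ _))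
  · refine max_le ?_ ?_
    · obtain ⟨l', hl', hle⟩ := coverSet_mono emb emb.injective hdκ_mem
      exact (hdω ▸ csInf_le' hl').trans hle
    · obtain ⟨l', hl', hle⟩ := cof_le_cover hdκ_mem
      exact (hcf ▸ csInf_le' hl').trans hle
end

section
/- If φ: Σ → 2^X is an usco from a topological space Σ onto X, and Σ is the union of λ compact subsets, then X is the union of λ compact subsets. In particular, for a Banach space X with its weak topology, CG(X) ≤ d(ℓK(X)). -/
open Cardinal Set

/-- An usco `φ : Σ → 2^X`: compact values, upper semicontinuous, with union all of `X`. -/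
def IsUsco {S X : Type*} [TopologicalSpace S] [TopologicalSpace X] (φ : S → Set X) : Prop :=
  (∀ σ, IsCompact (φ σ)) ∧ (∀ U : Set X, IsOpen U → IsOpen {σ | φ σ ⊆ U}) ∧
    (⋃ σ, φ σ) = Set.univ

/-- The weight of a topological space: the least cardinality of a basis. -/
noncomputable def tWeight (X : Type*) [TopologicalSpace X] : Cardinal :=
  sInf {c | ∃ B : Set (Set X), #↥B = c ∧ TopologicalSpace.IsTopologicalBasis B}

/-- The index of 𝒦-analyticity `ℓK(X)`. -/
noncomputable def ellK (X : Type) [TopologicalSpace X] : Cardinal :=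
  sInf {c | ℵ₀ ≤ c ∧ ∃ (M : Type) (_ : MetricSpace M), CompleteSpace M ∧ tWeight M = c ∧
    ∃ φ : M → Set X, IsUsco φ}

/-- The index of compact generation `CG(X)`: the least infinite cardinal `κ` such that
there is a family of `κ` many compact subsets of `X` whose union is dense. -/
noncomputable def CG (X : Type) [TopologicalSpace X] : Cardinal :=
  sInf {c | ℵ₀ ≤ c ∧ ∃ S : Set (Set X), #↥S ≤ c ∧ (∀ t ∈ S, IsCompact t) ∧ Dense (⋃₀ S)}

section Aux

open Metric Filter Function PiNat Topology TopologicalSpace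

lemma usco_image_compact {S X : Type*} [TopologicalSpace S] [TopologicalSpace X]
    {φ : S → Set X} (h : IsUsco φ) {K : Set S} (hK : IsCompact K) :
    IsCompact (⋃ σ ∈ K, φ σ) := by
  obtain ⟨hcomp, husc, -⟩ := h
  refine isCompact_of_finite_subcover fun {ι} U hUo hcov => ?_
  classical
  have hchoice : ∀ σ : S, ∃ t : Finset ι, σ ∈ K → φ σ ⊆ ⋃ i ∈ t, U i := by
    intro σ
    by_cases hσ : σ ∈ K
    · obtain ⟨t, ht⟩ := (hcomp σ).elim_finite_subcover U hUo
        (fun x hx => hcov (mem_biUnion hσ hx))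
      exact ⟨t, fun _ => ht⟩
    · exact ⟨∅, fun h => absurd h hσ⟩
  choose t ht using hchoice
  have hVo : ∀ σ' : S, IsOpen {τ | φ τ ⊆ ⋃ i ∈ t σ', U i} := fun σ' =>
    husc _ (isOpen_biUnion fun i _ => hUo i)
  have hKcov : K ⊆ ⋃ σ' : S, {τ | φ τ ⊆ ⋃ i ∈ t σ', U i} := fun σ hσ =>
    mem_iUnion.2 ⟨σ, ht σ hσ⟩
  obtain ⟨F, hF⟩ := hK.elim_finite_subcover _ hVo hKcov
  refine ⟨F.biUnion t, fun x hx => ?_⟩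
  obtain ⟨σ, hσK, hxσ⟩ : ∃ σ ∈ K, x ∈ φ σ := by simpa using hx
  obtain ⟨σ', hσ'F, hσV⟩ : ∃ σ' ∈ F, φ σ ⊆ ⋃ i ∈ t σ', U i := by simpa using hF hσK
  obtain ⟨i, hit, hxi⟩ : ∃ i ∈ t σ', x ∈ U i := by simpa using hσV hxσ
  exact mem_biUnion (Finset.mem_biUnion.2 ⟨σ', hσ'F, hit⟩) hxi

lemma key_surj {ι : Type} [TopologicalSpace ι] [DiscreteTopology ι] (α : Type*)
    [MetricSpace α] [CompleteSpace α] [Nonempty α] (u : ι → α) (hu : DenseRange u) :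
    ∃ f : (ℕ → ι) → α, Continuous f ∧ Function.Surjective f := by
  letI : MetricSpace (ℕ → ι) := @PiNat.metricSpace (fun _ => ι) _ _
  have I0 : (0 : ℝ) < 1 / 2 := by norm_num
  have I1 : (1 / 2 : ℝ) < 1 := by norm_num
  let s : Set (ℕ → ι) := { x | (⋂ n : ℕ, closedBall (u (x n)) ((1 / 2) ^ n)).Nonempty }
  let g : s → α := fun x => x.2.some
  have A : ∀ (x : s) (n : ℕ), dist (g x) (u ((x : ℕ → ι) n)) ≤ (1 / 2) ^ n := fun x n =>
    (mem_iInter.1 x.2.some_mem n : _)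
  have g_cont : Continuous g := by
    refine continuous_iff_continuousAt.2 fun y => ?_
    refine continuousAt_of_locally_lipschitz zero_lt_one 4 fun x hxy => ?_
    rcases eq_or_ne x y with (rfl | hne)
    · simp
    have hne' : x.1 ≠ y.1 := Subtype.coe_injective.ne hne
    have dist' : dist x y = dist x.1 y.1 := rfl
    let n := firstDiff x.1 y.1 - 1
    have diff_pos : 0 < firstDiff x.1 y.1 := by
      by_contra! h
      apply apply_firstDiff_ne hne'
      rw [Nat.le_zero.1 h]
      apply apply_eq_of_dist_lt _ le_rfl
      rw [pow_zero]
      exact hxy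
    have hn : firstDiff x.1 y.1 = n + 1 := (Nat.succ_pred_eq_of_pos diff_pos).symm
    rw [dist', dist_eq_of_ne hne', hn]
    have B : x.1 n = y.1 n := mem_cylinder_firstDiff x.1 y.1 n (Nat.pred_lt diff_pos.ne')
    calc
      dist (g x) (g y) ≤ dist (g x) (u (x.1 n)) + dist (g y) (u (x.1 n)) :=
        dist_triangle_right _ _ _
      _ = dist (g x) (u (x.1 n)) + dist (g y) (u (y.1 n)) := by rw [← B]
      _ ≤ (1 / 2) ^ n + (1 / 2) ^ n := add_le_add (A x n) (A y n)
      _ = 4 * (1 / 2) ^ (n + 1) := by ring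
  have g_surj : Function.Surjective g := fun y ↦ by
    have : ∀ n : ℕ, ∃ j, y ∈ closedBall (u j) ((1 / 2) ^ n) := fun n ↦ by
      rcases hu.exists_dist_lt y (by simp : (0 : ℝ) < (1 / 2) ^ n) with ⟨j, hj⟩
      exact ⟨j, hj.le⟩
    choose x hx using this
    have I : (⋂ n : ℕ, closedBall (u (x n)) ((1 / 2) ^ n)).Nonempty := ⟨y, mem_iInter.2 hx⟩
    refine ⟨⟨x, I⟩, ?_⟩
    refine dist_le_zero.1 ?_
    have J : ∀ n : ℕ, dist (g ⟨x, I⟩) y ≤ (1 / 2) ^ n + (1 / 2) ^ n := fun n =>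
      calc
        dist (g ⟨x, I⟩) y ≤ dist (g ⟨x, I⟩) (u (x n)) + dist y (u (x n)) :=
          dist_triangle_right _ _ _
        _ ≤ (1 / 2) ^ n + (1 / 2) ^ n := add_le_add (A ⟨x, I⟩ n) (hx n)
    have L : Tendsto (fun n : ℕ => (1 / 2 : ℝ) ^ n + (1 / 2) ^ n) atTop (nhds (0 + 0)) :=
      (tendsto_pow_atTop_nhds_zero_of_lt_one I0.le I1).add
        (tendsto_pow_atTop_nhds_zero_of_lt_one I0.le I1)
    rw [add_zero] at L
    exact ge_of_tendsto' L J
  have s_closed : IsClosed s := by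
    refine isClosed_iff_clusterPt.mpr fun x hx ↦ ?_
    have L : Tendsto (fun n : ℕ => diam (closedBall (u (x n)) ((1 / 2) ^ n))) atTop (nhds 0) := by
      have : Tendsto (fun n : ℕ => (2 : ℝ) * (1 / 2) ^ n) atTop (nhds (2 * 0)) :=
        (tendsto_pow_atTop_nhds_zero_of_lt_one I0.le I1).const_mul _
      rw [mul_zero] at this
      exact
        squeeze_zero (fun n => diam_nonneg) (fun n => diam_closedBall (pow_nonneg I0.le _)) this
    refine nonempty_iInter_of_nonempty_biInter (fun n => isClosed_closedBall)
      (fun n => isBounded_closedBall) (fun N ↦ ?_) L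
    obtain ⟨y, hxy, ys⟩ : ∃ y, y ∈ ball x ((1 / 2) ^ N) ∩ s :=
      clusterPt_principal_iff.1 hx _ (ball_mem_nhds x (pow_pos I0 N))
    have E :
      ⋂ (n : ℕ) (_ : n ≤ N), closedBall (u (x n)) ((1 / 2) ^ n) =
        ⋂ (n : ℕ) (_ : n ≤ N), closedBall (u (y n)) ((1 / 2) ^ n) := by
      refine iInter_congr fun n ↦ iInter_congr fun hn ↦ ?_
      have : x n = y n := apply_eq_of_dist_lt (mem_ball'.1 hxy) hn
      rw [this]
    rw [E]
    apply Nonempty.mono _ ys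
    apply iInter_subset_iInter₂
  obtain ⟨f, -, f_surj, f_cont⟩ :
    ∃ f : (ℕ → ι) → s, (∀ x : s, f x = x) ∧ Function.Surjective f ∧ Continuous f := by
    apply exists_retraction_subtype_of_isClosed s_closed
    simpa only [nonempty_coe_sort] using g_surj.nonempty
  exact ⟨g ∘ f, g_cont.comp f_cont, g_surj.comp f_surj⟩

lemma tWeight_mem (X : Type*) [TopologicalSpace X] :
    ∃ B : Set (Set X), #↥B = tWeight X ∧ TopologicalSpace.IsTopologicalBasis B := by
  have h : ∃ B : Set (Set X), #↥B = #{s : Set X | IsOpen s} ∧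
      TopologicalSpace.IsTopologicalBasis B := ⟨_, rfl, isTopologicalBasis_opens⟩
  have h2 := csInf_mem (s := {c | ∃ B : Set (Set X), #↥B = c ∧
      TopologicalSpace.IsTopologicalBasis B}) ⟨_, h⟩
  exact h2

lemma tWeight_infinite (M : Type*) [MetricSpace M] [Infinite M] : ℵ₀ ≤ tWeight M := by
  have h : ∃ B : Set (Set M), #↥B = #{s : Set M | IsOpen s} ∧
      TopologicalSpace.IsTopologicalBasis B := ⟨_, rfl, isTopologicalBasis_opens⟩
  refine le_csInf ⟨_, h⟩ ?_
  rintro c ⟨B, rfl, hB⟩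
  rw [Cardinal.aleph0_le_mk_iff]
  by_contra hfin
  rw [not_infinite_iff_finite] at hfin
  have hinj : Function.Injective (fun x : M => {U : B | x ∈ (U : Set M)}) := by
    intro x y hxy
    by_contra hne
    have hd : 0 < dist x y := dist_pos.2 hne
    obtain ⟨U, hUB, hxU, hUb⟩ := hB.exists_subset_of_mem_open (mem_ball_self hd) isOpen_ball
    have : y ∈ U := by
      have h2 : ({U : B | x ∈ (U : Set M)} : Set B) = {U : B | y ∈ (U : Set M)} := hxy
      have : (⟨U, hUB⟩ : B) ∈ {U : B | y ∈ (U : Set M)} := h2 ▸ hxU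
      exact this
    have : y ∈ ball x (dist x y) := hUb this
    simp [dist_comm] at this
  exact (Finite.false (α := M) (Finite.of_injective _ hinj))

lemma part2 (X : Type) [NormedAddCommGroup X] [NormedSpace ℝ X] (hX : CompleteSpace X) :
    CG (WeakSpace ℝ X) ≤ dCard (ellK (WeakSpace ℝ X)) := by
  classical
  haveI := hX
  -- Step A: the defining set of `ellK` is nonempty
  have hA : ∃ φ : X × ℝ → Set (WeakSpace ℝ X), IsUsco φ := by
    refine ⟨fun p => {toWeakSpace ℝ X p.1}, fun p => isCompact_singleton, ?_, ?_⟩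
    · intro U hU
      have hEq : {σ : X × ℝ | ({toWeakSpace ℝ X σ.1} : Set (WeakSpace ℝ X)) ⊆ U}
          = (fun σ : X × ℝ => toWeakSpaceCLM ℝ X σ.1) ⁻¹' U := by
        ext σ
        simp [Set.singleton_subset_iff, toWeakSpaceCLM_eq_toWeakSpace]
      rw [hEq]
      exact hU.preimage ((toWeakSpaceCLM ℝ X).continuous.comp continuous_fst)
    · rw [Set.eq_univ_iff_forall]
      intro x
      exact Set.mem_iUnion.2 ⟨((toWeakSpace ℝ X).symm x, 0), by simp⟩
  have hEne : {c | ℵ₀ ≤ c ∧ ∃ (M : Type) (_ : MetricSpace M), CompleteSpace M ∧ tWeight M = c ∧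
      ∃ φ : M → Set (WeakSpace ℝ X), IsUsco φ}.Nonempty :=
    ⟨tWeight (X × ℝ), tWeight_infinite _, X × ℝ, inferInstance, inferInstance, rfl, hA⟩
  obtain ⟨hℵ, M, _instM, hMcomp, hMw, φ, hφ⟩ : ℵ₀ ≤ ellK (WeakSpace ℝ X) ∧
      ∃ (M : Type) (_ : MetricSpace M), CompleteSpace M ∧ tWeight M = ellK (WeakSpace ℝ X) ∧
        ∃ φ : M → Set (WeakSpace ℝ X), IsUsco φ := csInf_mem hEne
  haveI : CompleteSpace M := hMcomp
  -- M is nonempty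
  have hMne : Nonempty M := by
    have : (toWeakSpace ℝ X 0) ∈ ⋃ σ, φ σ := hφ.2.2 ▸ Set.mem_univ _
    obtain ⟨σ, -⟩ := Set.mem_iUnion.1 this
    exact ⟨σ⟩
  haveI := hMne
  -- a dense subset of M of cardinality at most `ellK`
  obtain ⟨B, hBcard, hBbasis⟩ := tWeight_mem M
  rw [hMw] at hBcard
  let p : B → M := fun U => if h : (U : Set M).Nonempty then h.some else hMne.some
  have hpD : Dense (Set.range p) := by
    rw [dense_iff_inter_open]
    rintro U hU ⟨x, hx⟩
    obtain ⟨V, hVB, hxV, hVU⟩ := hBbasis.exists_subset_of_mem_open hx hU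
    have hVne : (V : Set M).Nonempty := ⟨x, hxV⟩
    refine ⟨p ⟨V, hVB⟩, hVU ?_, Set.mem_range_self _⟩
    simp only [p, dif_pos hVne]
    exact hVne.some_mem
  have hDle : #(Set.range p) ≤ #(ellK (WeakSpace ℝ X)).out := by
    rw [Cardinal.mk_out]
    exact le_trans Cardinal.mk_range_le (le_of_eq hBcard)
  obtain ⟨j⟩ := (Cardinal.le_def _ _).1 hDle
  have hrne : (Set.range p).Nonempty := hpD.nonempty
  haveI : Nonempty (Set.range p) := hrne.to_subtype
  let u : (ellK (WeakSpace ℝ X)).out → M := fun i => ((Function.invFun j i : Set.range p) : M)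
  have hu : DenseRange u := by
    have hsur : Function.Surjective (Function.invFun j) := Function.invFun_surjective j.injective
    have h1 : Set.range u = Subtype.val '' Set.range (Function.invFun j) := by
      rw [← Set.range_comp]; rfl
    have h2 : Set.range u = Set.range p := by
      rw [h1, hsur.range_eq, Set.image_univ, Subtype.range_coe]
    rw [DenseRange, h2]
    exact hpD
  -- continuous surjection from κ^ω onto M
  letI : TopologicalSpace (ellK (WeakSpace ℝ X)).out := ⊥
  haveI : DiscreteTopology (ellK (WeakSpace ℝ X)).out := ⟨rfl⟩
  haveI : Infinite (ellK (WeakSpace ℝ X)).out := by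
    rw [Cardinal.infinite_iff, Cardinal.mk_out]; exact hℵ
  obtain ⟨f, hfc, hfs⟩ := key_surj M u hu
  -- the compact cover of κ^ω realizing dCard
  have hdne : {l | ∃ S : Set (Set (ℕ → (ellK (WeakSpace ℝ X)).out)), #↥S = l ∧
      (∀ t ∈ S, IsCompact t) ∧ ⋃₀ S = Set.univ}.Nonempty := by
    refine ⟨_, Set.range (fun x : (ℕ → (ellK (WeakSpace ℝ X)).out) =>
      ({x} : Set (ℕ → (ellK (WeakSpace ℝ X)).out))), rfl, ?_, ?_⟩
    · rintro t ⟨x, rfl⟩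
      exact isCompact_singleton
    · exact Set.eq_univ_iff_forall.2 fun x => ⟨{x}, ⟨x, rfl⟩, rfl⟩
  obtain ⟨S, hScard, hScomp, hScov⟩ : ∃ S : Set (Set (ℕ → (ellK (WeakSpace ℝ X)).out)),
      #↥S = dCard (ellK (WeakSpace ℝ X)) ∧ (∀ t ∈ S, IsCompact t) ∧ ⋃₀ S = Set.univ :=
    csInf_mem hdne
  -- dCard is infinite
  have hdinf : ℵ₀ ≤ dCard (ellK (WeakSpace ℝ X)) := by
    by_contra hlt
    have hSlt : #↥S < ℵ₀ := by rw [hScard]; exact lt_of_not_ge hlt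
    have hSfin : S.Finite := Cardinal.lt_aleph0_iff_set_finite.1 hSlt
    have hcu : IsCompact (Set.univ : Set (ℕ → (ellK (WeakSpace ℝ X)).out)) :=
      hScov ▸ hSfin.isCompact_sUnion hScomp
    have himg : IsCompact ((fun x : ℕ → (ellK (WeakSpace ℝ X)).out => x 0) '' Set.univ) :=
      hcu.image (continuous_apply 0)
    have hiu : ((fun x : ℕ → (ellK (WeakSpace ℝ X)).out => x 0) '' Set.univ) = Set.univ := by
      rw [Set.image_univ]
      exact Set.range_eq_univ.2 fun y => ⟨fun _ => y, rfl⟩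
    rw [hiu] at himg
    have hfin : (Set.univ : Set ((ellK (WeakSpace ℝ X)).out)).Finite :=
      himg.finite ⟨inferInstance⟩
    exact Set.infinite_univ hfin
  -- conclude
  refine csInf_le (OrderBot.bddBelow _) ?_
  refine ⟨hdinf, (fun t => ⋃ σ ∈ f '' t, φ σ) '' S, ?_, ?_, ?_⟩
  · calc #((fun t => ⋃ σ ∈ f '' t, φ σ) '' S) ≤ #↥S := Cardinal.mk_image_le
      _ = dCard (ellK (WeakSpace ℝ X)) := hScard
  · rintro t ⟨t₀, ht₀, rfl⟩
    exact usco_image_compact hφ ((hScomp t₀ ht₀).image hfc)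
  · have huniv : ⋃₀ ((fun t => ⋃ σ ∈ f '' t, φ σ) '' S) = Set.univ := by
      rw [Set.eq_univ_iff_forall]
      intro x
      have : x ∈ ⋃ σ, φ σ := hφ.2.2 ▸ Set.mem_univ x
      obtain ⟨σ, hσ⟩ := Set.mem_iUnion.1 this
      obtain ⟨q, rfl⟩ := hfs σ
      have hq : q ∈ ⋃₀ S := hScov ▸ Set.mem_univ q
      obtain ⟨t₀, ht₀, hqt⟩ := hq
      exact ⟨_, ⟨t₀, ht₀, rfl⟩, Set.mem_biUnion (Set.mem_image_of_mem f hqt) hσ⟩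
    rw [huniv]
    exact dense_univ

end Aux

/-- If `φ : Σ → 2^X` is an usco and `Σ` is the union of a family of compact sets, then `X`
is the union of a family of compact sets over the same index; in particular, for a Banach
space `X` with its weak topology, `CG(X) ≤ d(ℓK(X))`. -/
theorem stmt10 :
    (∀ (S X : Type) (_ : TopologicalSpace S) (_ : TopologicalSpace X) (φ : S → Set X),
      IsUsco φ → ∀ (ι : Type) (K : ι → Set S), (∀ i, IsCompact (K i)) →
        (⋃ i, K i) = Set.univ →
        ∃ K' : ι → Set X, (∀ i, IsCompact (K' i)) ∧ (⋃ i, K' i) = Set.univ) ∧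
    (∀ (X : Type) (_ : NormedAddCommGroup X), ∀ _ : NormedSpace ℝ X, CompleteSpace X →
      CG (WeakSpace ℝ X) ≤ dCard (ellK (WeakSpace ℝ X))) := by
  constructor
  · intro S X _ _ φ h ι K hKc hKu
    refine ⟨fun i => ⋃ σ ∈ K i, φ σ, fun i => usco_image_compact h (hKc i), ?_⟩
    rw [Set.eq_univ_iff_forall]
    intro x
    have hx : x ∈ ⋃ σ, φ σ := h.2.2 ▸ Set.mem_univ x
    obtain ⟨σ, hσ⟩ := Set.mem_iUnion.1 hx
    have : σ ∈ ⋃ i, K i := hKu ▸ Set.mem_univ σ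
    obtain ⟨i, hi⟩ := Set.mem_iUnion.1 this
    exact Set.mem_iUnion.2 ⟨i, Set.mem_biUnion hi hσ⟩
  · intro X _ _ hX
    exact part2 X hX
end

section
/- Let Z be a metric space with a well-order <, and let 𝒜 be the family of all subsets A of Z such that every finite subset of A has the form {ξ_1 < ... < ξ_n} with d(ξ_i, ξ_j) ≤ 1/i for all i < j. Then every member of 𝒜 is at most countable; indeed the order type of any A ∈ 𝒜 in the well-order is at most ω + 1. -/
private lemma strictMono_snoc' {n : ℕ} {α : Type*} [Preorder α] {g : Fin n → α} {x : α}
    (hg : StrictMono g) (hx : ∀ i, g i < x) : StrictMono (Fin.snoc g x) := by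
  intro i j hij
  obtain ⟨i', rfl⟩ := Fin.exists_castSucc_eq.2 (Fin.ne_last_of_lt hij)
  rcases eq_or_ne j (Fin.last n) with rfl | hj
  · simp only [Fin.snoc_castSucc, Fin.snoc_last]
    exact hx i'
  · obtain ⟨j', rfl⟩ := Fin.exists_castSucc_eq.2 hj
    simp only [Fin.snoc_castSucc]
    exact hg (Fin.castSucc_lt_castSucc_iff.1 hij)

private lemma key' {Z : Type} [MetricSpace Z] [LinearOrder Z] {A : Set Z}
    (hA : ∀ (n : ℕ) (ξ : Fin n → Z), StrictMono ξ → (∀ i, ξ i ∈ A) →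
      ∀ i j : Fin n, i < j → dist (ξ i) (ξ j) ≤ 1 / ((i : ℕ) + 1 : ℝ))
    {x y : Z} (hx : x ∈ A) (hy : y ∈ A) (hxy : x < y)
    {s : Finset Z} (hsA : ↑s ⊆ A) (hs : ∀ z ∈ s, z < x) :
    dist x y ≤ 1 / (s.card + 1 : ℝ) := by
  set n := s.card with hn
  set g : Fin n → Z := fun i => (s.orderIsoOfFin hn.symm i : Z) with hg
  have hgmem : ∀ i, g i ∈ s := fun i => (s.orderIsoOfFin hn.symm i).2
  have hgmono : StrictMono g := fun i j h => by
    exact_mod_cast (s.orderIsoOfFin hn.symm).strictMono h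
  set ξ : Fin (n + 2) → Z := Fin.snoc (Fin.snoc g x) y with hξ
  have hξmono : StrictMono ξ := by
    apply strictMono_snoc'
    · apply strictMono_snoc' hgmono (fun i => hs _ (hgmem i))
    · refine Fin.lastCases ?_ ?_
      · simp [hxy]
      · intro i; simp only [Fin.snoc_castSucc]
        exact (hs _ (hgmem i)).trans hxy
  have hξmem : ∀ i, ξ i ∈ A := by
    refine Fin.lastCases ?_ ?_
    · simpa [hξ] using hy
    · refine Fin.lastCases ?_ ?_
      · simpa [hξ] using hx
      · intro i; simpa [hξ] using hsA (hgmem i)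
  have := hA (n + 2) ξ hξmono hξmem ⟨n, by omega⟩ ⟨n + 1, by omega⟩
    (by simp [Fin.lt_def])
  have e1 : (⟨n, by omega⟩ : Fin (n + 2)) = (Fin.last n).castSucc := by
    simp [Fin.ext_iff]
  have e2 : (⟨n + 1, by omega⟩ : Fin (n + 2)) = Fin.last (n + 1) := by
    simp [Fin.ext_iff]
  rw [e1, e2] at this
  simpa [hξ, Fin.snoc_castSucc, Fin.snoc_last] using this

/-- Let `Z` be a metric space with a well-order, and `𝒜` the family of all `A ⊆ Z` whose
finite subsets `{ξ₁ < … < ξₙ}` satisfy `d(ξᵢ, ξⱼ) ≤ 1/i` for `i < j`. Then every member of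
`𝒜` is countable; indeed its order type is at most `ω + 1` (there are no two elements `a < b`
of `A` lying above a strictly increasing sequence in `A`). -/
theorem stmt14 (Z : Type) [MetricSpace Z] [LinearOrder Z] [WellFoundedLT Z]
    (𝒜 : Set (Set Z))
    (h𝒜 : ∀ A : Set Z, A ∈ 𝒜 ↔ ∀ (n : ℕ) (ξ : Fin n → Z), StrictMono ξ →
      (∀ i, ξ i ∈ A) → ∀ i j : Fin n, i < j → dist (ξ i) (ξ j) ≤ 1 / ((i : ℕ) + 1 : ℝ)) :
    ∀ A ∈ 𝒜, A.Countable ∧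
      ¬∃ (f : ℕ → Z) (a b : Z), (∀ n, f n ∈ A) ∧ StrictMono f ∧ a ∈ A ∧ b ∈ A ∧
        (∀ n, f n < a) ∧ a < b := by
  intro A hAmem
  have hA := (h𝒜 A).1 hAmem
  -- the set of elements with at least n elements of A below them
  set C : ℕ → Set Z := fun n =>
    {x ∈ A | ¬ ∃ s : Finset Z, ↑s ⊆ A ∧ s.card = n ∧ ∀ z ∈ s, z < x} with hC
  have hCfin : ∀ n, (C n).Finite := by
    intro n
    by_contra hinf
    have hinf' : (C n).Infinite := hinf
    obtain ⟨t, hts, htc⟩ := hinf'.exists_subset_card_eq (n + 1)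
    have htne : t.Nonempty := Finset.card_pos.1 (by omega)
    set m := t.max' htne with hm
    have hmC : m ∈ C n := hts (t.max'_mem htne)
    refine hmC.2 ⟨t.erase m, ?_, ?_, ?_⟩
    · intro z hz
      exact (hts (Finset.erase_subset _ _ hz)).1
    · rw [Finset.card_erase_of_mem (t.max'_mem htne), htc]; omega
    · intro z hz
      exact lt_of_le_of_ne (t.le_max' z (Finset.mem_of_mem_erase hz))
        (Finset.ne_of_mem_erase hz)
  set B : Set Z := {x ∈ A | ∀ n, ∃ s : Finset Z, ↑s ⊆ A ∧ s.card = n ∧ ∀ z ∈ s, z < x}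
    with hB
  have hdist : ∀ x ∈ A, ∀ y ∈ A, x < y →
      (∀ n, ∃ s : Finset Z, ↑s ⊆ A ∧ s.card = n ∧ ∀ z ∈ s, z < x) → x = y := by
    intro x hx y hy hxy hall
    have hle : ∀ n : ℕ, dist x y ≤ 1 / (n + 1 : ℝ) := by
      intro n
      obtain ⟨s, hsA, hsc, hsx⟩ := hall n
      have := key' hA hx hy hxy hsA hsx
      rwa [hsc] at this
    have h0 : dist x y ≤ 0 :=
      ge_of_tendsto' tendsto_one_div_add_atTop_nhds_zero_nat hle
    exact dist_le_zero.1 h0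
  constructor
  · -- countability
    have hsub : A ⊆ B ∪ ⋃ n, C n := by
      intro x hx
      by_cases h : ∀ n, ∃ s : Finset Z, ↑s ⊆ A ∧ s.card = n ∧ ∀ z ∈ s, z < x
      · exact Or.inl ⟨hx, h⟩
      · obtain ⟨n, hn⟩ := not_forall.mp h
        exact Or.inr (Set.mem_iUnion.2 ⟨n, hx, hn⟩)
    have hBsub : B.Subsingleton := by
      intro x hxB y hyB
      by_contra hne
      rcases lt_or_gt_of_ne hne with h | h
      · exact hne (hdist x hxB.1 y hyB.1 h hxB.2)
      · exact hne ((hdist y hyB.1 x hxB.1 h hyB.2).symm)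
    exact Set.Countable.mono hsub
      ((hBsub.countable).union (Set.countable_iUnion fun n => (hCfin n).countable))
  · -- no ω + 2 chain
    rintro ⟨f, a, b, hfA, hfm, ha, hb, hfa, hab⟩
    refine hab.ne (hdist a ha b hb hab fun n => ?_)
    refine ⟨(Finset.range n).image f, ?_, ?_, ?_⟩
    · intro z hz
      simp only [Finset.coe_image, Set.mem_image] at hz
      obtain ⟨k, _, rfl⟩ := hz
      exact hfA k
    · rw [Finset.card_image_of_injective _ hfm.injective, Finset.card_range]
    · intro z hz
      simp only [Finset.mem_image] at hz
      obtain ⟨k, _, rfl⟩ := hz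
      exact hfa k
end

section
/- Let Z be a metric space with a well-order, 𝒜 the adequate family of all A ⊆ Z whose finite subsets {ξ_1 < ... < ξ_n} satisfy d(ξ_i, ξ_j) ≤ 1/i for i < j. If Z_0 ⊆ Z is a non-discrete subset (has an accumulation point z ∈ Z_0's closure within Z), then Z_0 contains an infinite member of 𝒜. -/
/-- Let `Z` be a metric space with a well-order, and `𝒜` the family of all `A ⊆ Z` whose
finite subsets `{ξ₁ < … < ξₙ}` satisfy `d(ξᵢ, ξⱼ) ≤ 1/i` for `i < j`. If `Z₀ ⊆ Z` has an
accumulation point `z`, then `Z₀` contains an infinite member of `𝒜`. -/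
theorem stmt15 (Z : Type) [MetricSpace Z] [LinearOrder Z] [WellFoundedLT Z]
    (𝒜 : Set (Set Z))
    (h𝒜 : ∀ A : Set Z, A ∈ 𝒜 ↔ ∀ (n : ℕ) (ξ : Fin n → Z), StrictMono ξ →
      (∀ i, ξ i ∈ A) → ∀ i j : Fin n, i < j → dist (ξ i) (ξ j) ≤ 1 / ((i : ℕ) + 1 : ℝ))
    (Z₀ : Set Z) (z : Z) (hz : AccPt z (Filter.principal Z₀)) :
    ∃ A : Set Z, A ⊆ Z₀ ∧ A ∈ 𝒜 ∧ A.Infinite := by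
  classical
  have wf : WellFounded ((· < ·) : Z → Z → Prop) := wellFounded_lt
  -- every punctured ball around z contains infinitely many points of Z₀
  have hball : ∀ r : ℝ, 0 < r → {x | x ∈ Z₀ ∧ x ≠ z ∧ dist x z < r}.Infinite := by
    intro r hr
    by_contra hfin
    rw [Set.not_infinite] at hfin
    have hzF : z ∉ {x | x ∈ Z₀ ∧ x ≠ z ∧ dist x z < r} := by simp
    have hU : (Metric.ball z r ∩ {x | x ∈ Z₀ ∧ x ≠ z ∧ dist x z < r}ᶜ) ∈ nhds z :=
      Filter.inter_mem (Metric.ball_mem_nhds z hr)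
        (hfin.isClosed.isOpen_compl.mem_nhds hzF)
    rw [accPt_iff_nhds] at hz
    obtain ⟨y, ⟨⟨hyb, hyc⟩, hyZ₀⟩, hyz⟩ := hz _ hU
    exact hyc ⟨hyZ₀, hyz, Metric.mem_ball.mp hyb⟩
  -- the "goodness" predicate
  set Good : Z → Prop := fun w =>
    ∀ r : ℝ, 0 < r → {x | x ∈ Z₀ ∧ x ≠ z ∧ dist x z < r ∧ w < x}.Infinite with hGood
  -- base point
  have base_exists : ∃ w : Z, (w ∈ Z₀ ∧ w ≠ z ∧ dist w z < 1 / (2 * (0 + 1))) ∧ Good w := by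
    have hT : ({x | x ∈ Z₀ ∧ x ≠ z ∧ dist x z < 1 / 2}).Infinite := hball _ (by norm_num)
    refine ⟨wf.min _ hT.nonempty, ?_, ?_⟩
    · have hmm : wf.min _ hT.nonempty ∈ {x | x ∈ Z₀ ∧ x ≠ z ∧ dist x z < 1 / 2} :=
        wf.min_mem _ hT.nonempty
      refine ⟨hmm.1, hmm.2.1, ?_⟩
      have e : (1:ℝ) / (2 * (0 + 1)) = 1 / 2 := by norm_num
      rw [e]
      exact hmm.2.2
    · intro r hr
      set m := wf.min {x | x ∈ Z₀ ∧ x ≠ z ∧ dist x z < 1 / 2} hT.nonempty with hm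
      have hB : ({x | x ∈ Z₀ ∧ x ≠ z ∧ dist x z < min r (1 / 2)}).Infinite :=
        hball _ (lt_min hr (by norm_num))
      refine ((hB.diff (Set.finite_singleton m))).mono ?_
      rintro x ⟨⟨hx1, hx2, hx3⟩, hx4⟩
      have hxT : x ∈ {x | x ∈ Z₀ ∧ x ≠ z ∧ dist x z < 1 / 2} :=
        ⟨hx1, hx2, lt_of_lt_of_le hx3 (min_le_right _ _)⟩
      have : ¬ x < m := wf.not_lt_min _ hxT
      have hmx : m < x := lt_of_le_of_ne (not_lt.mp this) (Ne.symm (by simpa using hx4))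
      exact ⟨hx1, hx2, lt_of_lt_of_le hx3 (min_le_left _ _), hmx⟩
  -- step
  have step_exists : ∀ (n : ℕ) (w : Z), Good w →
      ∃ w' : Z, (w' ∈ Z₀ ∧ w' ≠ z ∧ dist w' z < 1 / (2 * ((n : ℝ) + 2)) ∧ w < w') ∧ Good w' := by
    intro n w hw
    have hpos : (0 : ℝ) < 1 / (2 * ((n : ℝ) + 2)) := by positivity
    have hT : ({x | x ∈ Z₀ ∧ x ≠ z ∧ dist x z < 1 / (2 * ((n : ℝ) + 2)) ∧ w < x}).Infinite :=
      hw _ hpos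
    refine ⟨wf.min _ hT.nonempty, ?_, ?_⟩
    · exact (wf.min_mem _ hT.nonempty :
        wf.min _ hT.nonempty ∈ {x | x ∈ Z₀ ∧ x ≠ z ∧ dist x z < 1 / (2 * ((n : ℝ) + 2)) ∧ w < x})
    · intro r hr
      set m := wf.min _ hT.nonempty with hm
      have hB : ({x | x ∈ Z₀ ∧ x ≠ z ∧ dist x z < min r (1 / (2 * ((n : ℝ) + 2))) ∧ w < x}).Infinite :=
        hw _ (lt_min hr hpos)
      refine ((hB.diff (Set.finite_singleton m))).mono ?_
      rintro x ⟨⟨hx1, hx2, hx3, hx5⟩, hx4⟩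
      have hxT : x ∈ {x | x ∈ Z₀ ∧ x ≠ z ∧ dist x z < 1 / (2 * ((n : ℝ) + 2)) ∧ w < x} :=
        ⟨hx1, hx2, lt_of_lt_of_le hx3 (min_le_right _ _), hx5⟩
      have : ¬ x < m := wf.not_lt_min _ hxT
      have hmx : m < x := lt_of_le_of_ne (not_lt.mp this) (Ne.symm (by simpa using hx4))
      exact ⟨hx1, hx2, lt_of_lt_of_le hx3 (min_le_left _ _), hmx⟩
  obtain ⟨w0, hw0, hw0good⟩ := base_exists
  choose next hnext hnextgood using step_exists
  -- build the sequence
  let f : ℕ → {w : Z // Good w} := fun n =>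
    Nat.rec ⟨w0, hw0good⟩ (fun n p => ⟨next n p.1 p.2, hnextgood n p.1 p.2⟩) n
  have hfs : ∀ n : ℕ, (f (n + 1)).1 = next n (f n).1 (f n).2 := fun n => rfl
  let ξ : ℕ → Z := fun n => (f n).1
  have hmem : ∀ n, ξ n ∈ Z₀ := by
    intro n
    cases n with
    | zero => exact hw0.1
    | succ m => exact (hnext m (f m).1 (f m).2).1
  have hne : ∀ n, ξ n ≠ z := by
    intro n
    cases n with
    | zero => exact hw0.2.1
    | succ m => exact (hnext m (f m).1 (f m).2).2.1
  have hdist : ∀ n : ℕ, dist (ξ n) z < 1 / (2 * ((n : ℝ) + 1)) := by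
    intro n
    cases n with
    | zero => show dist w0 z < _; simpa using hw0.2.2
    | succ m =>
      have := (hnext m (f m).1 (f m).2).2.2.1
      have h2 : (1 : ℝ) / (2 * ((m : ℝ) + 2)) = 1 / (2 * (((m + 1 : ℕ) : ℝ) + 1)) := by
        push_cast
        ring_nf
      rw [h2] at this
      exact this
  have hlt : ∀ n : ℕ, ξ n < ξ (n + 1) := fun n => (hnext n (f n).1 (f n).2).2.2.2
  have hmono : StrictMono ξ := strictMono_nat_of_lt_succ hlt
  refine ⟨Set.range ξ, ?_, ?_, ?_⟩
  · rintro x ⟨n, rfl⟩; exact hmem n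
  · rw [h𝒜]
    intro n η hη hηA i j hij
    have hk : ∀ i : Fin n, ∃ m : ℕ, ξ m = η i := fun i => hηA i
    choose k hkeq using hk
    have hkmono : StrictMono k := by
      intro a b hab
      have : ξ (k a) < ξ (k b) := by rw [hkeq, hkeq]; exact hη hab
      exact hmono.lt_iff_lt.mp this
    have hkge : ∀ i : Fin n, (i : ℕ) ≤ k i := by
      have H : ∀ m : ℕ, ∀ hm : m < n, m ≤ k ⟨m, hm⟩ := by
        intro m
        induction m with
        | zero => intro hm; exact Nat.zero_le _
        | succ p ih =>
          intro hm
          have hp : p < n := lt_trans (Nat.lt_succ_self p) hm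
          have h1 := ih hp
          have h2 : k ⟨p, hp⟩ < k ⟨p + 1, hm⟩ := hkmono (by simp [Fin.lt_def])
          omega
      intro i
      have := H i.1 i.2
      simpa using this
    have d1 : dist (η i) (η j) ≤ dist (η i) z + dist (η j) z := dist_triangle_right _ _ _
    rw [← hkeq i, ← hkeq j]
    have hdi := (hdist (k i)).le
    have hdj := (hdist (k j)).le
    have hkij : k i ≤ k j := (hkmono hij).le
    have hjge : 1 / (2 * ((k j : ℝ) + 1)) ≤ 1 / (2 * ((k i : ℝ) + 1)) := by
      have : ((k i : ℕ) : ℝ) ≤ ((k j : ℕ) : ℝ) := by exact_mod_cast hkij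
      gcongr
    have hfin : dist (ξ (k i)) (ξ (k j)) ≤ 1 / ((k i : ℝ) + 1) := by
      calc dist (ξ (k i)) (ξ (k j)) ≤ dist (ξ (k i)) z + dist (ξ (k j)) z :=
            dist_triangle_right _ _ _
        _ ≤ 1 / (2 * ((k i : ℝ) + 1)) + 1 / (2 * ((k i : ℝ) + 1)) := by
            exact add_le_add hdi (hdj.trans hjge)
        _ = 1 / ((k i : ℝ) + 1) := by
            have hx : ((k i : ℕ) : ℝ) + 1 ≠ 0 := by positivity
            field_simp
            norm_num
    refine hfin.trans (one_div_le_one_div_of_le (by positivity) ?_)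
    have hki : ((i : ℕ) : ℝ) ≤ ((k i : ℕ) : ℝ) := by exact_mod_cast hkge i
    linarith
  · exact Set.infinite_range_of_injective hmono.injective
end

section
/- Consider T = κ^κ (the product of κ copies of the discrete space κ) and the family 𝒜 of all subsets A ⊆ T such that there exists λ < κ with: for all distinct x, y ∈ A, x and y agree on all coordinates below λ and x_λ ≠ y_λ. Then for any decomposition T = ⋃_{i<κ} T_i such that every member of 𝒜 has only finitely many elements in each T_i, there is a contradiction; i.e., no such decomposition exists. -/
/-- The set of values `x i` over `x ∈ T i` agreeing with `t` below `i`. -/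
def diagF (ι : Type) [LinearOrder ι] (T : ι → Set (ι → ι)) (t : ι → ι) (i : ι) : Set ι :=
  {v | ∃ x ∈ T i, (∀ j < i, x j = t j) ∧ x i = v}

open Classical in
/-- Diagonal function constructed by well-founded recursion. -/
noncomputable def diagT (ι : Type) [LinearOrder ι] [WellFoundedLT ι] [Infinite ι]
    (T : ι → Set (ι → ι)) : ι → ι :=
  WellFounded.fix (wellFounded_lt) (fun i rec =>
    if h : ({v | ∃ x ∈ T i, (∀ j, ∀ hj : j < i, x j = rec j hj) ∧ x i = v})ᶜ.Nonempty
    then h.choose else Classical.arbitrary ι)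

open Classical in
theorem diagT_spec (ι : Type) [LinearOrder ι] [WellFoundedLT ι] [Infinite ι]
    (T : ι → Set (ι → ι)) (i : ι)
    (h : ((diagF ι T (diagT ι T) i))ᶜ.Nonempty) :
    diagT ι T i ∈ (diagF ι T (diagT ι T) i)ᶜ := by
  have heq : diagT ι T i =
      if h : ((diagF ι T (diagT ι T) i))ᶜ.Nonempty then h.choose
      else Classical.arbitrary ι := WellFounded.fix_eq _ _ _
  rw [heq, dif_pos h]
  exact h.choose_spec

/-- Let `ι` be an infinite well-ordered index set (representing the cardinal `κ`),
`T = κ^κ = ι → ι`, and `𝒜` the adequate family of all `A ⊆ T` such that for some `λ = l`,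
distinct members of `A` agree on all coordinates below `l` and differ at coordinate `l`.
Then there is no decomposition `T = ⋃_{i} T_i` such that every member of `𝒜` has only
finitely many elements in each `T_i`. -/
theorem stmt17 (ι : Type) [LinearOrder ι] [WellFoundedLT ι] [Infinite ι] :
    ¬∃ T : ι → Set (ι → ι),
      (⋃ i, T i) = Set.univ ∧
      ∀ A : Set (ι → ι),
        (∃ l : ι, ∀ x ∈ A, ∀ y ∈ A, x ≠ y → (∀ j < l, x j = y j) ∧ x l ≠ y l) →
        ∀ i, (A ∩ T i).Finite := by
  rintro ⟨T, hcov, hfin⟩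
  set t := diagT ι T with ht
  have hF : ∀ i, (diagF ι T t i).Finite := by
    intro i
    have hg : ∀ v ∈ diagF ι T t i, ∃ x, x ∈ T i ∧ (∀ j < i, x j = t j) ∧ x i = v := by
      intro v hv
      obtain ⟨x, hx1, hx2, hx3⟩ := hv
      exact ⟨x, hx1, hx2, hx3⟩
    choose g hg1 hg2 hg3 using hg
    set A : Set (ι → ι) := {x | ∃ v, ∃ hv : v ∈ diagF ι T t i, x = g v hv} with hA
    have hAadq : ∃ l : ι, ∀ x ∈ A, ∀ y ∈ A, x ≠ y → (∀ j < l, x j = y j) ∧ x l ≠ y l := by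
      refine ⟨i, ?_⟩
      rintro x ⟨v, hv, rfl⟩ y ⟨w, hw, rfl⟩ hxy
      have hvw : v ≠ w := by
        rintro rfl
        exact hxy rfl
      constructor
      · intro j hj
        rw [hg2 v hv j hj, hg2 w hw j hj]
      · rw [hg3 v hv, hg3 w hw]
        exact hvw
    have hfinA := hfin A hAadq i
    apply Set.Finite.subset (hfinA.image (fun x => x i))
    intro v hv
    exact ⟨g v hv, ⟨⟨v, hv, rfl⟩, hg1 v hv⟩, hg3 v hv⟩
  have hcompl : ∀ i, ((diagF ι T t i))ᶜ.Nonempty :=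
    fun i => ((hF i).infinite_compl).nonempty
  have htuniv : t ∈ Set.univ := Set.mem_univ t
  rw [← hcov] at htuniv
  obtain ⟨s, ⟨i, rfl⟩, hti⟩ := htuniv
  have hmem : t i ∈ diagF ι T t i := ⟨t, hti, fun j _ => rfl, rfl⟩
  exact diagT_spec ι T i (hcompl i) hmem
end
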